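/- Let ρ ∈ ℂ be a primitive cube root of unity, λ ∈ ℂ nonzero with a fixed sixth root μ (μ⁶ = λ). Let n = a + b = x + y + z with a,b,x,y,z ∈ ℕ, let B ∈ GLₙ(ℂ), let D = diag(1ₓ, ρ²·1_y, ρ·1_z) (block diagonal) and E = diag(1ₐ, −1_b). Then the assignment σ₁ ↦ μ·B⁻¹DBE, σ₂ ↦ μ·E·B⁻¹DB defines a representation of B₃, i.e., the two matrices M₁ = μB⁻¹DBE and M₂ = μEB⁻¹DB satisfy the braid relation M₁M₂M₁ = M₂M₁M₂. -/
import Mathlib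


open Matrix

/-- The matrices `M₁ = μ·B⁻¹DBE` and `M₂ = μ·E·B⁻¹DB` satisfy the braid relation,
where `D = diag(1ₓ, ρ²·1_y, ρ·1_z)`, `E = diag(1ₐ, −1_b)`, `ρ` a primitive cube root
of unity and `μ⁶ = λ ≠ 0`. -/
theorem stmt2 (a b x y z : ℕ) (hn : a + b = x + y + z)
    (ρ : ℂ) (hρ : IsPrimitiveRoot ρ 3)
    (lam μ : ℂ) (hlam : lam ≠ 0) (hμ : μ ^ 6 = lam)
    (B : Matrix (Fin (a + b)) (Fin (a + b)) ℂ) (hB : IsUnit B) :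
    let D : Matrix (Fin (a + b)) (Fin (a + b)) ℂ :=
      Matrix.diagonal fun i => if (i : ℕ) < x then 1 else if (i : ℕ) < x + y then ρ ^ 2 else ρ
    let E : Matrix (Fin (a + b)) (Fin (a + b)) ℂ :=
      Matrix.diagonal fun i => if (i : ℕ) < a then 1 else -1
    let M₁ := μ • (B⁻¹ * D * B * E)
    let M₂ := μ • (E * (B⁻¹ * D * B))
    M₁ * M₂ * M₁ = M₂ * M₁ * M₂ := by
  intro D E M₁ M₂
  have hρ3 : ρ ^ 3 = 1 := hρ.pow_eq_one
  have hdet : IsUnit B.det := (Matrix.isUnit_iff_isUnit_det B).mp hB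
  have hBB : B⁻¹ * B = 1 := Matrix.nonsing_inv_mul B hdet
  have hBB' : B * B⁻¹ = 1 := Matrix.mul_nonsing_inv B hdet
  have hE : E * E = 1 := by
    show (Matrix.diagonal _) * (Matrix.diagonal _) = 1
    rw [Matrix.diagonal_mul_diagonal, ← Matrix.diagonal_one]
    exact congrArg _ (funext fun i => by split_ifs <;> ring)
  have hDD : D * (D * D) = 1 := by
    show (Matrix.diagonal _) * ((Matrix.diagonal _) * (Matrix.diagonal _)) = 1
    rw [Matrix.diagonal_mul_diagonal, Matrix.diagonal_mul_diagonal, ← Matrix.diagonal_one]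
    refine congrArg _ (funext fun i => ?_)
    split_ifs with h1 h2
    · ring
    · rw [show ρ ^ 2 * (ρ ^ 2 * ρ ^ 2) = (ρ ^ 3) ^ 2 by ring, hρ3, one_pow]
    · rw [show ρ * (ρ * ρ) = ρ ^ 3 by ring, hρ3]
  set C := B⁻¹ * D * B with hC
  have hC3 : C * (C * C) = 1 := by
    rw [hC]
    calc B⁻¹ * D * B * (B⁻¹ * D * B * (B⁻¹ * D * B))
        = B⁻¹ * (D * ((B * B⁻¹) * (D * ((B * B⁻¹) * (D * B))))) := by
          simp only [mul_assoc]
      _ = B⁻¹ * ((D * (D * D)) * B) := by rw [hBB']; simp only [one_mul, mul_assoc]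
      _ = 1 := by rw [hDD, one_mul, hBB]
  have hE' : ∀ M : Matrix (Fin (a + b)) (Fin (a + b)) ℂ, E * (E * M) = M := fun M => by
    rw [← mul_assoc, hE, one_mul]
  have hC' : ∀ M : Matrix (Fin (a + b)) (Fin (a + b)) ℂ, C * (C * (C * M)) = M := fun M => by
    rw [show C * (C * (C * M)) = (C * (C * C)) * M by simp only [mul_assoc], hC3, one_mul]
  show μ • (C * E) * (μ • (E * C)) * (μ • (C * E)) = μ • (E * C) * (μ • (C * E)) * (μ • (E * C))
  simp only [Matrix.smul_mul, Matrix.mul_smul, smul_smul]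
  congr 1
  simp only [mul_assoc, hE', hC', hC3, mul_one]
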